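/- In an authentication system where encoding rules are used with equal probability, perfect secrecy holds if and only if every message occurs with the same frequency in each column of the encoding matrix; formally: if for every message m and every pair of source states s, s', the number of encoding rules e with e(s) = m equals the number with e(s') = m, and the source distribution together with the uniform key distribution is used, then p_S(s | m) = p_S(s) for all s and all m with p_M(m) > 0. -/

import Mathlib

/-- If in an authentication system the encoding rules are used with equal probability
and every message occurs with the same frequency in each column of the encoding
matrix (i.e. for all `m, s, s'` the number of rules `e` with `e(s) = m` equals the
number with `e(s') = m`), then the system has perfect secrecy: for every source
state `s` and every message `m` with `p_M(m) > 0`, the posterior probability of `s`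
given `m` equals the prior `p_S(s)`. -/
theorem uniform_keys_column_frequency_perfect_secrecy
    {S M E : Type*} [Fintype S] [Fintype M] [Fintype E]
    [DecidableEq S] [DecidableEq M]
    (hE : 0 < Fintype.card E)
    (enc : E → S → M) (hinj : ∀ e : E, Function.Injective (enc e))
    (pS : S → ℝ) (hpS : ∀ s, 0 ≤ pS s) (hpSsum : ∑ s, pS s = 1)
    (hcol : ∀ m : M, ∀ s s' : S,
      (Finset.univ.filter (fun e : E => enc e s = m)).card
        = (Finset.univ.filter (fun e : E => enc e s' = m)).card) :
    ∀ s : S, ∀ m : M,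
      (0 < ∑ e : E, ∑ s' : S,
          (if enc e s' = m then (1 / (Fintype.card E : ℝ)) * pS s' else 0)) →
      (((Finset.univ.filter (fun e : E => enc e s = m)).card : ℝ)
          * (1 / (Fintype.card E : ℝ)) * pS s)
        / (∑ e : E, ∑ s' : S,
            (if enc e s' = m then (1 / (Fintype.card E : ℝ)) * pS s' else 0))
      = pS s := by
  intro s m hpos
  set c : ℝ := 1 / (Fintype.card E : ℝ) with hc
  set N : ℕ := (Finset.univ.filter (fun e : E => enc e s = m)).card with hN
  have hD : (∑ e : E, ∑ s' : S,
      (if enc e s' = m then c * pS s' else 0)) = (N : ℝ) * c := by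
    rw [Finset.sum_comm]
    have h1 : ∀ s' : S, (∑ e : E, (if enc e s' = m then c * pS s' else 0))
        = (N : ℝ) * (c * pS s') := by
      intro s'
      rw [← Finset.sum_filter, Finset.sum_const, nsmul_eq_mul, ← hcol m s s']
    calc (∑ s' : S, ∑ e : E, (if enc e s' = m then c * pS s' else 0))
        = ∑ s' : S, (N : ℝ) * (c * pS s') := Finset.sum_congr rfl (fun s' _ => h1 s')
      _ = (N : ℝ) * c * ∑ s' : S, pS s' := by rw [Finset.mul_sum]; ring_nf
      _ = (N : ℝ) * c := by rw [hpSsum, mul_one]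
  rw [hD] at hpos ⊢
  exact mul_div_cancel_left₀ (pS s) hpos.ne'
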